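/- Let m ≡ 0 (mod 6) with m ≥ 6 and n = 2^m − 1. For i ∈ {0,1,2}, define T_i = { 1 ≤ j ≤ n−1 : w₂(j) ≡ i (mod 3) }. Then |T_0| = (2^m − 4)/3 and |T_1| = |T_2| = (2^m − 1)/3. -/

import Mathlib

def w2 (x : ℕ) : ℕ := (Nat.digits 2 x).sum

lemma w2_eq (j : ℕ) : w2 j = j % 2 + w2 (j / 2) := by
  rcases Nat.eq_zero_or_pos j with h | h
  · simp [h, w2]
  · unfold w2
    rw [Nat.digits_def' (by norm_num : 1 < 2) h]
    simp

lemma w2_add_pow (m j : ℕ) (hj : j < 2 ^ m) : w2 (2 ^ m + j) = w2 j + 1 := by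
  induction m generalizing j with
  | zero =>
    interval_cases j
    simp [w2]
  | succ m ih =>
    have hpos : 0 < 2 ^ (m + 1) + j := by positivity
    have h1 : (2 ^ (m + 1) + j) % 2 = j % 2 := by
      omega
    have h2 : (2 ^ (m + 1) + j) / 2 = 2 ^ m + j / 2 := by
      omega
    rw [w2_eq (2 ^ (m + 1) + j), h1, h2, ih (j / 2) (by omega), w2_eq j]
    ring

lemma w2_pow_sub_one (m : ℕ) : w2 (2 ^ m - 1) = m := by
  induction m with
  | zero => simp [w2]
  | succ m ih =>
    have h : 2 ^ (m + 1) - 1 = 2 * (2 ^ m - 1) + 1 := by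
      have : 1 ≤ 2 ^ m := Nat.one_le_two_pow
      omega
    have hp : 1 ≤ 2 ^ m := Nat.one_le_two_pow
    rw [h, w2_eq]
    have h1 : (2 * (2 ^ m - 1) + 1) % 2 = 1 := by omega
    have h2 : (2 * (2 ^ m - 1) + 1) / 2 = 2 ^ m - 1 := by omega
    rw [h1, h2, ih]
    omega

def g (m i : ℕ) : ℕ := ((Finset.range (2 ^ m)).filter (fun j => w2 j % 3 = i)).card

lemma g_succ (m i : ℕ) (hi : i < 3) : g (m + 1) i = g m i + g m ((i + 2) % 3) := by
  unfold g
  have hsplit : Finset.range (2 ^ (m + 1)) =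
      Finset.range (2 ^ m) ∪ Finset.Ico (2 ^ m) (2 ^ (m + 1)) := by
    rw [Finset.range_eq_Ico, Finset.range_eq_Ico, Finset.Ico_union_Ico_eq_Ico (Nat.zero_le _)
      (Nat.pow_le_pow_right (by norm_num) (by omega))]
  rw [hsplit, Finset.filter_union, Finset.card_union_of_disjoint]
  · congr 1
    apply Finset.card_bij (fun j _ => j - 2 ^ m)
    · intro a ha
      simp only [Finset.mem_filter, Finset.mem_Ico, Finset.mem_range] at ha ⊢
      obtain ⟨⟨h1, h2⟩, h3⟩ := ha
      have hlt : a - 2 ^ m < 2 ^ m := by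
        have : (2:ℕ) ^ (m+1) = 2 * 2 ^ m := by ring
        omega
      refine ⟨hlt, ?_⟩
      have : a = 2 ^ m + (a - 2 ^ m) := by omega
      rw [this, w2_add_pow m _ hlt] at h3
      omega
    · intro a ha b hb hab
      simp only [Finset.mem_filter, Finset.mem_Ico] at ha hb
      omega
    · intro b hb
      simp only [Finset.mem_filter, Finset.mem_range] at hb
      refine ⟨2 ^ m + b, ?_, by omega⟩
      simp only [Finset.mem_filter, Finset.mem_Ico]
      have : (2:ℕ) ^ (m+1) = 2 * 2 ^ m := by ring
      rw [w2_add_pow m b hb.1]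
      omega
  · apply Finset.disjoint_filter_filter
    rw [Finset.range_eq_Ico]
    exact Finset.Ico_disjoint_Ico_consecutive 0 (2 ^ m) (2 ^ (m + 1))

lemma g_main (k : ℕ) : 3 * g (6 * k) 0 = 2 ^ (6 * k) + 2 ∧
    3 * g (6 * k) 1 = 2 ^ (6 * k) - 1 ∧ 3 * g (6 * k) 2 = 2 ^ (6 * k) - 1 := by
  induction k with
  | zero =>
    have : g 0 0 = 1 ∧ g 0 1 = 0 ∧ g 0 2 = 0 := by
      unfold g
      refine ⟨?_, ?_, ?_⟩ <;> simp [Finset.range_one, Finset.filter_singleton, w2]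
    simp only [Nat.mul_zero, pow_zero]
    omega
  | succ k ih =>
    obtain ⟨h0, h1, h2⟩ := ih
    set M := 6 * k
    have e1_0 := g_succ M 0 (by norm_num)
    have e1_1 := g_succ M 1 (by norm_num)
    have e1_2 := g_succ M 2 (by norm_num)
    have e2_0 := g_succ (M+1) 0 (by norm_num)
    have e2_1 := g_succ (M+1) 1 (by norm_num)
    have e2_2 := g_succ (M+1) 2 (by norm_num)
    have e3_0 := g_succ (M+2) 0 (by norm_num)
    have e3_1 := g_succ (M+2) 1 (by norm_num)
    have e3_2 := g_succ (M+2) 2 (by norm_num)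
    have e4_0 := g_succ (M+3) 0 (by norm_num)
    have e4_1 := g_succ (M+3) 1 (by norm_num)
    have e4_2 := g_succ (M+3) 2 (by norm_num)
    have e5_0 := g_succ (M+4) 0 (by norm_num)
    have e5_1 := g_succ (M+4) 1 (by norm_num)
    have e5_2 := g_succ (M+4) 2 (by norm_num)
    have e6_0 := g_succ (M+5) 0 (by norm_num)
    have e6_1 := g_succ (M+5) 1 (by norm_num)
    have e6_2 := g_succ (M+5) 2 (by norm_num)
    norm_num at e1_0 e1_1 e1_2 e2_0 e2_1 e2_2 e3_0 e3_1 e3_2 e4_0 e4_1 e4_2 e5_0 e5_1 e5_2 e6_0 e6_1 e6_2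
    have hM6 : 6 * (k + 1) = M + 6 := by omega
    have hpow : (2:ℕ) ^ (M + 6) = 64 * 2 ^ M := by ring
    have hpos : 1 ≤ (2:ℕ) ^ M := Nat.one_le_two_pow
    rw [hM6]
    simp only [show M+1+1=M+2 by omega, show M+2+1=M+3 by omega, show M+3+1=M+4 by omega,
      show M+4+1=M+5 by omega, show M+5+1=M+6 by omega] at e2_0 e2_1 e2_2 e3_0 e3_1 e3_2 e4_0 e4_1 e4_2 e5_0 e5_1 e5_2 e6_0 e6_1 e6_2
    omega

theorem stmt13 (m : ℕ) (hm : m % 6 = 0) (hm6 : 6 ≤ m) (n : ℕ) (hn : n = 2 ^ m - 1) :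
    let T : ℕ → Finset ℕ := fun i => (Finset.Icc 1 (n - 1)).filter (fun j => w2 j % 3 = i)
    (T 0).card = (2 ^ m - 4) / 3 ∧ (T 1).card = (2 ^ m - 1) / 3 ∧
    (T 2).card = (2 ^ m - 1) / 3 := by
  intro T
  have hT : ∀ i, T i = (Finset.Icc 1 (n - 1)).filter (fun j => w2 j % 3 = i) := fun i => rfl
  have hk : m = 6 * (m / 6) := by omega
  obtain ⟨c0, c1, c2⟩ := g_main (m / 6)
  rw [← hk] at c0 c1 c2
  have h4 : 64 ≤ 2 ^ m := by
    calc (64:ℕ) = 2 ^ 6 := by norm_num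
    _ ≤ 2 ^ m := Nat.pow_le_pow_right (by norm_num) hm6
  have hn1 : n - 1 = 2 ^ m - 2 := by omega
  have hset : Finset.range (2 ^ m) = insert 0 (insert (2 ^ m - 1) (Finset.Icc 1 (2 ^ m - 2))) := by
    ext j
    simp only [Finset.mem_range, Finset.mem_insert, Finset.mem_Icc]
    omega
  have hw0 : w2 0 % 3 = 0 := by simp [w2]
  have hwn : w2 (2 ^ m - 1) % 3 = 0 := by rw [w2_pow_sub_one]; omega
  have key : ∀ i, g m i =
      ((insert 0 (insert (2 ^ m - 1) (Finset.Icc 1 (2 ^ m - 2)))).filter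
        (fun j => w2 j % 3 = i)).card := by
    intro i
    unfold g
    rw [hset]
  have k0 : g m 0 = (T 0).card + 2 := by
    rw [key 0, Finset.filter_insert, Finset.filter_insert, if_pos hwn, if_pos hw0,
      Finset.card_insert_of_notMem, Finset.card_insert_of_notMem, hT 0, hn1]
    · simp only [Finset.mem_filter, Finset.mem_Icc]
      omega
    · simp only [Finset.mem_insert, Finset.mem_filter, Finset.mem_Icc]
      omega
  have k1 : g m 1 = (T 1).card := by
    rw [key 1, Finset.filter_insert, Finset.filter_insert, if_neg (by omega), if_neg (by omega),
      hT 1, hn1]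
  have k2 : g m 2 = (T 2).card := by
    rw [key 2, Finset.filter_insert, Finset.filter_insert, if_neg (by omega), if_neg (by omega),
      hT 2, hn1]
  refine ⟨by omega, by omega, by omega⟩
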